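/- Let d, m ≥ 1, let L > 0, and let F_1, …, F_m : EuclideanSpace ℝ (Fin d) → ℝ be differentiable functions whose gradients ∇F_i are each Lipschitz with constant L. Let F = (1/m) Σ_{i=1}^m F_i, and suppose there exist β, ζ ≥ 0 such that for every x, (1/m) Σ_{i=1}^m ‖∇F_i(x) - ∇F(x)‖² ≤ β²‖∇F(x)‖² + ζ². Then for any points x_1, …, x_m with mean x̄ = (1/m) Σ_{i=1}^m x_i, (1/m) Σ_{i=1}^m ‖∇F_i(x_i)‖² ≤ (3L²/m) Σ_{i=1}^m ‖x_i - x̄‖² + 3(β² + 1)‖∇F(x̄)‖² + 3ζ². -/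

import Mathlib

/-- Proposition 3 of the paper: bounding the average squared local gradient
norm by the consensus error, the global gradient at the average point, and the
inter-client heterogeneity constants. -/
theorem average_local_gradient_bound
    (d m : ℕ) (hd : 1 ≤ d) (hm : 1 ≤ m)
    (L : ℝ) (hL : 0 < L)
    (F : Fin m → EuclideanSpace ℝ (Fin d) → ℝ)
    (hdiff : ∀ i, Differentiable ℝ (F i))
    (hlip : ∀ i x y, ‖gradient (F i) x - gradient (F i) y‖ ≤ L * ‖x - y‖)
    (Fbar : EuclideanSpace ℝ (Fin d) → ℝ)
    (hFbar : ∀ y, Fbar y = (1 / (m : ℝ)) * ∑ i, F i y)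
    (β ζ : ℝ) (hβ : 0 ≤ β) (hζ : 0 ≤ ζ)
    (hdissim : ∀ x, (1 / (m : ℝ)) *
        ∑ i, ‖gradient (F i) x - gradient Fbar x‖ ^ 2 ≤
      β ^ 2 * ‖gradient Fbar x‖ ^ 2 + ζ ^ 2)
    (x : Fin m → EuclideanSpace ℝ (Fin d))
    (xbar : EuclideanSpace ℝ (Fin d))
    (hxbar : xbar = (1 / (m : ℝ)) • ∑ i, x i) :
    (1 / (m : ℝ)) * ∑ i, ‖gradient (F i) (x i)‖ ^ 2 ≤
      (3 * L ^ 2 / (m : ℝ)) * ∑ i, ‖x i - xbar‖ ^ 2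
        + 3 * (β ^ 2 + 1) * ‖gradient Fbar xbar‖ ^ 2 + 3 * ζ ^ 2 := by
  have hm' : (0:ℝ) < m := by exact_mod_cast hm
  set g := gradient Fbar xbar with hg
  have key : ∀ i, ‖gradient (F i) (x i)‖ ^ 2 ≤
      3 * (L ^ 2 * ‖x i - xbar‖ ^ 2) + 3 * ‖gradient (F i) xbar - g‖ ^ 2
        + 3 * ‖g‖ ^ 2 := by
    intro i
    have h1 : gradient (F i) (x i) =
        (gradient (F i) (x i) - gradient (F i) xbar)
          + (gradient (F i) xbar - g) + g := by abel
    have hn : ‖gradient (F i) (x i)‖ ≤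
        ‖gradient (F i) (x i) - gradient (F i) xbar‖
          + ‖gradient (F i) xbar - g‖ + ‖g‖ := by
      rw [congrArg norm h1]
      exact le_trans (norm_add_le _ _) (add_le_add_left (norm_add_le _ _) _)
    have h2 := hlip i (x i) xbar
    have h3 : (0:ℝ) ≤ ‖gradient (F i) (x i) - gradient (F i) xbar‖ := norm_nonneg _
    have h4 : (0:ℝ) ≤ ‖gradient (F i) xbar - g‖ := norm_nonneg _
    have h5 : (0:ℝ) ≤ ‖g‖ := norm_nonneg _
    have h6 : (0:ℝ) ≤ ‖gradient (F i) (x i)‖ := norm_nonneg _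
    have h7 : (0:ℝ) ≤ ‖x i - xbar‖ := norm_nonneg _
    nlinarith [sq_nonneg (‖gradient (F i) (x i) - gradient (F i) xbar‖ - ‖gradient (F i) xbar - g‖),
      sq_nonneg (‖gradient (F i) (x i) - gradient (F i) xbar‖ - ‖g‖),
      sq_nonneg (‖gradient (F i) xbar - g‖ - ‖g‖)]
  have hsum : ∑ i, ‖gradient (F i) (x i)‖ ^ 2 ≤
      3 * L ^ 2 * ∑ i, ‖x i - xbar‖ ^ 2
        + 3 * ∑ i, ‖gradient (F i) xbar - g‖ ^ 2 + 3 * (m : ℝ) * ‖g‖ ^ 2 := by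
    calc ∑ i, ‖gradient (F i) (x i)‖ ^ 2
        ≤ ∑ i, (3 * (L ^ 2 * ‖x i - xbar‖ ^ 2)
            + 3 * ‖gradient (F i) xbar - g‖ ^ 2 + 3 * ‖g‖ ^ 2) :=
          Finset.sum_le_sum fun i _ => key i
      _ = 3 * L ^ 2 * ∑ i, ‖x i - xbar‖ ^ 2
            + 3 * ∑ i, ‖gradient (F i) xbar - g‖ ^ 2 + 3 * (m : ℝ) * ‖g‖ ^ 2 := by
          simp only [Finset.sum_add_distrib, ← Finset.mul_sum, Finset.sum_const,
            Finset.card_univ, Fintype.card_fin, nsmul_eq_mul]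
          ring
  have hdis := hdissim xbar
  rw [← hg] at hdis
  have hB : (0:ℝ) ≤ ∑ i, ‖x i - xbar‖ ^ 2 :=
    Finset.sum_nonneg fun i _ => sq_nonneg _
  have h1m : (1 / (m:ℝ)) * ∑ i, ‖gradient (F i) (x i)‖ ^ 2 ≤
      (1 / (m:ℝ)) * (3 * L ^ 2 * ∑ i, ‖x i - xbar‖ ^ 2
        + 3 * ∑ i, ‖gradient (F i) xbar - g‖ ^ 2 + 3 * (m : ℝ) * ‖g‖ ^ 2) := by
    apply mul_le_mul_of_nonneg_left hsum (by positivity)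
  calc (1 / (m:ℝ)) * ∑ i, ‖gradient (F i) (x i)‖ ^ 2
      ≤ (1 / (m:ℝ)) * (3 * L ^ 2 * ∑ i, ‖x i - xbar‖ ^ 2
        + 3 * ∑ i, ‖gradient (F i) xbar - g‖ ^ 2 + 3 * (m : ℝ) * ‖g‖ ^ 2) := h1m
    _ = 3 * L ^ 2 / (m:ℝ) * ∑ i, ‖x i - xbar‖ ^ 2
        + 3 * ((1 / (m:ℝ)) * ∑ i, ‖gradient (F i) xbar - g‖ ^ 2) + 3 * ‖g‖ ^ 2 := by
        field_simp
    _ ≤ 3 * L ^ 2 / (m:ℝ) * ∑ i, ‖x i - xbar‖ ^ 2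
        + 3 * (β ^ 2 * ‖g‖ ^ 2 + ζ ^ 2) + 3 * ‖g‖ ^ 2 := by
        have := mul_le_mul_of_nonneg_left hdis (by norm_num : (0:ℝ) ≤ 3)
        linarith
    _ = 3 * L ^ 2 / (m:ℝ) * ∑ i, ‖x i - xbar‖ ^ 2
        + 3 * (β ^ 2 + 1) * ‖g‖ ^ 2 + 3 * ζ ^ 2 := by ring
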